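/- The map M∘R, where M(p) = p_x + 2p² and R(p) = -p, is a bijection from V := {v = (1/2)x^{-1} + v_1 x + ∑_{k≥3} v_k x^k} onto U := {u = x^{-2} + u_0 + ∑_{k≥2} u_k x^k}: for each u ∈ U there is a unique v ∈ V with -v_x + 2v² = u. -/

import Mathlib

/-- Formal derivative on Laurent series: `(D q).coeff k = (k+1) * q.coeff (k+1)`. -/
noncomputable def D (q : LaurentSeries ℂ) : LaurentSeries ℂ :=
  HahnSeries.ofSuppBddBelow (fun k => ((k + 1 : ℤ) : ℂ) * q.coeff (k + 1))
    (HahnSeries.forallLTEqZero_supp_BddBelow _ (q.order - 1) (fun m hm => by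
      have h : m + 1 < q.order := by omega
      simp [HahnSeries.coeff_eq_zero_of_lt_order h]))

@[simp] lemma D_coeff (q : LaurentSeries ℂ) (k : ℤ) :
    (D q).coeff k = ((k + 1 : ℤ) : ℂ) * q.coeff (k + 1) := rfl

/-- The residue: coefficient of `x⁻¹`. -/
noncomputable def res (q : LaurentSeries ℂ) : ℂ := q.coeff (-1)

/-- `V`: series of the form `(1/2)x⁻¹ + v₁x + ∑_{k≥3} vₖ xᵏ`. -/
def memV (v : LaurentSeries ℂ) : Prop :=
  v.coeff (-1) = 1/2 ∧ v.coeff 0 = 0 ∧ v.coeff 2 = 0 ∧ ∀ k < (-1 : ℤ), v.coeff k = 0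

/-- `W`: series of the form `w₀ + ∑_{k≥2} wₖ xᵏ`. -/
def memW (w : LaurentSeries ℂ) : Prop :=
  w.coeff 1 = 0 ∧ ∀ k < (0 : ℤ), w.coeff k = 0

/-- `U`: series of the form `x⁻² + u₀ + ∑_{k≥2} uₖ xᵏ`. -/
def memU (u : LaurentSeries ℂ) : Prop :=
  u.coeff (-2) = 1 ∧ u.coeff (-1) = 0 ∧ u.coeff 1 = 0 ∧ ∀ k < (-2 : ℤ), u.coeff k = 0

/-- The Miura transformation `M(v) = v_x + 2v²`. -/
noncomputable def M (v : LaurentSeries ℂ) : LaurentSeries ℂ := D v + 2 * v ^ 2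

/-- The composition `M ∘ R` of Miura with the reflection `R(v) = -v`:
`(M∘R)(v) = -v_x + 2v²`. -/
noncomputable def MR (v : LaurentSeries ℂ) : LaurentSeries ℂ := -(D v) + 2 * v ^ 2
lemma sq_coeff (v : LaurentSeries ℂ) (hv : ∀ k < (-1:ℤ), v.coeff k = 0) (k : ℤ) :
    (v ^ 2).coeff k = ∑ i ∈ Finset.Icc (-1 : ℤ) (k + 1), v.coeff i * v.coeff (k - i) := by
  have hge : ∀ i : ℤ, v.coeff i ≠ 0 → -1 ≤ i := fun i h => by
    by_contra hc; exact h (hv i (by omega))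
  rw [sq, HahnSeries.coeff_mul]
  rw [Finset.sum_subset (h := ?hsub) (f := fun ij => v.coeff ij.1 * v.coeff ij.2)
      (s₁ := Finset.antidiagonal v.isPWO_support v.isPWO_support k)
      (s₂ := (Finset.Icc (-1 : ℤ) (k + 1)).image (fun i => (i, k - i))) ?hzero]
  · rw [Finset.sum_image ?hinj]
    case hinj => intro x _ y _ h; simpa using congrArg Prod.fst h
  case hsub =>
    intro p hp
    rw [Finset.mem_addAntidiagonal] at hp
    obtain ⟨h1, h2, h3⟩ := hp
    rw [HahnSeries.mem_support] at h1 h2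
    have ha := hge _ h1; have hb := hge _ h2
    simp only [Finset.mem_image, Finset.mem_Icc]
    refine ⟨p.1, ⟨by omega, by omega⟩, ?_⟩
    have : k - p.1 = p.2 := by omega
    rw [this]
  case hzero =>
    intro p hp hnp
    obtain ⟨i, hi, rfl⟩ := Finset.mem_image.mp hp
    rw [Finset.mem_addAntidiagonal] at hnp
    push_neg at hnp
    simp only [HahnSeries.mem_support, ne_eq, not_not] at hnp
    by_cases h1 : v.coeff i = 0
    · simp [h1]
    · by_cases h2 : v.coeff (k - i) = 0
      · simp [h2]
      · exact absurd (by ring) (hnp h1 h2)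
lemma MR_coeff (v : LaurentSeries ℂ) (hv : ∀ k < (-1:ℤ), v.coeff k = 0) (k : ℤ) :
    (MR v).coeff k = -((k + 1 : ℤ) : ℂ) * v.coeff (k + 1)
      + 2 * ∑ i ∈ Finset.Icc (-1 : ℤ) (k + 1), v.coeff i * v.coeff (k - i) := by
  rw [MR, HahnSeries.coeff_add, HahnSeries.coeff_neg, D_coeff, two_mul, HahnSeries.coeff_add,
    sq_coeff v hv]
  ring

lemma MR_coeff_nonneg (v : LaurentSeries ℂ) (h1 : v.coeff (-1) = 1/2)
    (hv : ∀ k < (-1:ℤ), v.coeff k = 0) (k : ℤ) (hk : 0 ≤ k) :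
    (MR v).coeff k = (1 - (k : ℂ)) * v.coeff (k + 1)
      + 2 * ∑ i ∈ Finset.Icc (0 : ℤ) k, v.coeff i * v.coeff (k - i) := by
  rw [MR_coeff v hv k]
  have hsplit : Finset.Icc (-1:ℤ) (k+1) = insert (-1) (insert (k+1) (Finset.Icc 0 k)) := by
    ext i; simp only [Finset.mem_Icc, Finset.mem_insert]; omega
  rw [hsplit, Finset.sum_insert (by simp only [Finset.mem_insert, Finset.mem_Icc]; omega),
    Finset.sum_insert (by simp only [Finset.mem_Icc]; omega)]
  have e1 : k - (-1) = k + 1 := by ring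
  have e2 : k - (k + 1) = -1 := by ring
  rw [e1, e2, h1]
  push_cast
  ring
noncomputable def cc (u : LaurentSeries ℂ) : ℕ → ℂ
  | 0 => 0
  | 1 => u.coeff 0
  | 2 => 0
  | (n+3) => (u.coeff ((n:ℤ)+2)
      - 2 * ∑ i ∈ (Finset.range (n+3)).attach, cc u i * cc u (n+2-(i:ℕ)))
      / (2 - ((n:ℤ)+3))
  decreasing_by
  · have := i.2; simp only [Finset.mem_range] at this; omega
  · have := i.2; simp only [Finset.mem_range] at this; omega

noncomputable def vcoef (u : LaurentSeries ℂ) : ℤ → ℂ := fun k =>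
  if k = -1 then (1/2 : ℂ) else if k < 0 then 0 else cc u k.toNat

noncomputable def vOf (u : LaurentSeries ℂ) : LaurentSeries ℂ :=
  HahnSeries.ofSuppBddBelow (vcoef u)
    (HahnSeries.forallLTEqZero_supp_BddBelow _ (-1) (fun m hm => by
      simp only [vcoef, if_neg (by omega : ¬ m = -1), if_pos (by omega : m < 0)]))

@[simp] lemma vOf_coeff (u : LaurentSeries ℂ) (k : ℤ) : (vOf u).coeff k = vcoef u k := rfl

lemma vcoef_neg_one (u : LaurentSeries ℂ) : vcoef u (-1) = 1/2 := by simp [vcoef]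

lemma vcoef_nonneg (u : LaurentSeries ℂ) (m : ℤ) (hm : 0 ≤ m) :
    vcoef u m = cc u m.toNat := by
  simp only [vcoef, if_neg (by omega : ¬ m = -1), if_neg (by omega : ¬ m < 0)]

lemma vcoef_low (u : LaurentSeries ℂ) : ∀ k < (-1:ℤ), vcoef u k = 0 := fun k hk => by
  simp only [vcoef, if_neg (by omega : ¬ k = -1), if_pos (by omega : k < 0)]

lemma vOf_low (u : LaurentSeries ℂ) : ∀ k < (-1:ℤ), (vOf u).coeff k = 0 := fun k hk => by
  rw [vOf_coeff]; exact vcoef_low u k hk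

lemma sum_Icc_int (f : ℤ → ℂ) (n : ℕ) :
    ∑ i ∈ Finset.Icc (0:ℤ) (n:ℤ), f i = ∑ i ∈ Finset.range (n+1), f (i:ℤ) := by
  induction n with
  | zero => simp
  | succ n ih =>
      have hsplit : Finset.Icc (0:ℤ) ((n+1:ℕ):ℤ) = insert ((n:ℤ)+1) (Finset.Icc 0 (n:ℤ)) := by
        ext i; simp only [Finset.mem_Icc, Finset.mem_insert]; omega
      rw [hsplit, Finset.sum_insert (by simp only [Finset.mem_Icc]; omega), ih,
        show ((n:ℤ)+1) = ((n+1:ℕ):ℤ) by push_cast; ring]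
      conv_rhs => rw [Finset.sum_range_succ]
      rw [add_comm]

lemma conv_eq (u : LaurentSeries ℂ) (k : ℕ) :
    ∑ i ∈ Finset.Icc (0:ℤ) (k:ℤ), (vOf u).coeff i * (vOf u).coeff ((k:ℤ) - i)
      = ∑ i ∈ Finset.range (k+1), cc u i * cc u (k - i) := by
  rw [sum_Icc_int]
  refine Finset.sum_congr rfl (fun i hi => ?_)
  have hik : i ≤ k := by simpa [Nat.lt_succ_iff] using hi
  rw [vOf_coeff, vOf_coeff, vcoef_nonneg u _ (by positivity),
    vcoef_nonneg u _ (by omega), Int.toNat_natCast,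
    show ((k:ℤ) - i) = ((k - i : ℕ) : ℤ) by omega, Int.toNat_natCast]
lemma cc_zero (u : LaurentSeries ℂ) : cc u 0 = 0 := by simp [cc]
lemma cc_one (u : LaurentSeries ℂ) : cc u 1 = u.coeff 0 := by simp [cc]
lemma cc_two (u : LaurentSeries ℂ) : cc u 2 = 0 := by simp [cc]
lemma cc_succ (u : LaurentSeries ℂ) (n : ℕ) :
    cc u (n+3) = (u.coeff ((n:ℤ)+2)
      - 2 * ∑ i ∈ Finset.range (n+3), cc u i * cc u (n+2-i)) / (2 - ((n:ℤ)+3)) := by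
  rw [cc, Finset.sum_attach (Finset.range (n+3)) (fun i => cc u i * cc u (n+2-i))]
lemma memV_vOf (u : LaurentSeries ℂ) : memV (vOf u) := by
  refine ⟨vcoef_neg_one u, ?_, ?_, vOf_low u⟩
  · rw [vOf_coeff, vcoef_nonneg u 0 le_rfl]; exact cc_zero u
  · rw [vOf_coeff, vcoef_nonneg u 2 (by omega)]; exact cc_two u

lemma MR_vOf (u : LaurentSeries ℂ) (hu : memU u) : MR (vOf u) = u := by
  obtain ⟨hu2, hu1, hup1, hulow⟩ := hu
  ext k
  by_cases hk0 : 0 ≤ k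
  · obtain ⟨n, rfl⟩ := Int.eq_ofNat_of_zero_le hk0
    rw [MR_coeff_nonneg (vOf u) (by rw [vOf_coeff]; exact vcoef_neg_one u) (vOf_low u) _
      (by positivity), conv_eq, vOf_coeff, vcoef_nonneg u _ (by omega),
      show ((n:ℤ)+1).toNat = n+1 by omega]
    match n with
    | 0 => simp [cc_one, cc_zero]
    | 1 =>
        rw [cc_two]
        simp [Finset.sum_range_succ, cc_zero, cc_one, hup1]
    | (m+2) =>
        rw [show m+2+1 = m+3 by ring, cc_succ]
        have hm1 : ((m:ℂ)+1) ≠ 0 := by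
          have h' : ((m+1:ℕ):ℂ) ≠ 0 := Nat.cast_ne_zero.mpr (Nat.succ_ne_zero m)
          push_cast at h'
          exact h'
        have hne : (2 : ℂ) - ((m:ℂ)+3) ≠ 0 := by
          intro h
          exact hm1 (by linear_combination -h)
        push_cast
        field_simp
        ring
  · push_neg at hk0
    rw [MR_coeff (vOf u) (vOf_low u) k]
    rcases lt_trichotomy k (-2) with hk | hk | hk
    · rw [vOf_low u _ (by omega), Finset.Icc_eq_empty (by omega), Finset.sum_empty,
        hulow k hk]
      ring
    · subst hk
      rw [show (-2:ℤ) + 1 = -1 by ring, Finset.Icc_self, Finset.sum_singleton,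
        show (-2:ℤ) - (-1) = -1 by ring, vOf_coeff, vcoef_neg_one, hu2]
      norm_num
    · have hk1 : k = -1 := by omega
      subst hk1
      rw [show (-1:ℤ) + 1 = 0 by ring,
        show Finset.Icc (-1:ℤ) 0 = insert (-1) {0} from by ext i; simp; omega,
        Finset.sum_insert (by simp), Finset.sum_singleton, hu1]
      simp only [vOf_coeff, vcoef_nonneg u 0 le_rfl, show (-1:ℤ) - (-1) = 0 by ring,
        show (-1:ℤ) - 0 = -1 by ring, Int.toNat_zero, cc_zero]
      ring
lemma eq_vOf (u : LaurentSeries ℂ) (v : LaurentSeries ℂ) (hv : memV v) (heq : MR v = u) :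
    v = vOf u := by
  obtain ⟨h1, h0, h2, hlow⟩ := hv
  have key : ∀ n : ℕ, v.coeff (n:ℤ) = cc u n := by
    intro n
    induction n using Nat.strong_induction_on with
    | _ n ih =>
      match n with
      | 0 => rw [cc_zero]; simpa using h0
      | 1 =>
          have e : (MR v).coeff 0 = u.coeff 0 := by rw [heq]
          rw [MR_coeff_nonneg v h1 hlow 0 le_rfl, Finset.Icc_self, Finset.sum_singleton] at e
          simp [h0] at e
          rw [cc_one]
          simpa using e
      | 2 => rw [cc_two]; simpa using h2
      | (m+3) =>
          have e : (MR v).coeff ((m:ℤ)+2) = u.coeff ((m:ℤ)+2) := by rw [heq]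
          rw [MR_coeff_nonneg v h1 hlow ((m:ℤ)+2) (by positivity)] at e
          have hsum : ∑ i ∈ Finset.Icc (0:ℤ) ((m:ℤ)+2), v.coeff i * v.coeff ((m:ℤ)+2 - i)
              = ∑ i ∈ Finset.range (m+3), cc u i * cc u (m+2-i) := by
            rw [show (m:ℤ)+2 = ((m+2:ℕ):ℤ) by push_cast; ring, sum_Icc_int]
            refine Finset.sum_congr rfl (fun i hi => ?_)
            have hik : i ≤ m+2 := by simpa [Nat.lt_succ_iff] using hi
            rw [ih i (by omega), show ((m+2:ℕ):ℤ) - (i:ℤ) = ((m+2-i : ℕ):ℤ) by omega,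
              ih (m+2-i) (by omega)]
          rw [hsum] at e
          rw [cc_succ, show ((m+3:ℕ):ℤ) = (m:ℤ)+2+1 by push_cast; ring]
          have hm1 : ((m:ℂ)+1) ≠ 0 := by
            have h' : ((m+1:ℕ):ℂ) ≠ 0 := Nat.cast_ne_zero.mpr (Nat.succ_ne_zero m)
            push_cast at h'
            exact h'
          have hne : (2 : ℂ) - ((m:ℂ)+3) ≠ 0 := by
            intro h
            exact hm1 (by linear_combination -h)
          push_cast at e ⊢
          rw [eq_div_iff hne]
          linear_combination e
  ext k
  rw [vOf_coeff]
  rcases lt_trichotomy k (-1) with hk | hk | hk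
  · rw [vcoef_low u k hk]; exact hlow k hk
  · subst hk; rw [vcoef_neg_one]; exact h1
  · rw [vcoef_nonneg u k (by omega), ← key k.toNat, Int.toNat_of_nonneg (by omega)]
/-- `M ∘ R` is a bijection from `V` onto `U`. -/
theorem stmt8 :
    (∀ v : LaurentSeries ℂ, memV v → memU (MR v)) ∧
    (∀ u : LaurentSeries ℂ, memU u → ∃! v : LaurentSeries ℂ, memV v ∧ MR v = u) := by
  constructor
  · intro v hv
    obtain ⟨h1, h0, h2, hlow⟩ := hv
    refine ⟨?_, ?_, ?_, ?_⟩
    · rw [MR_coeff v hlow (-2), show (-2:ℤ)+1 = -1 by ring, Finset.Icc_self,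
        Finset.sum_singleton, show (-2:ℤ) - (-1) = -1 by ring, h1]
      norm_num
    · rw [MR_coeff v hlow (-1), show (-1:ℤ)+1 = 0 by ring,
        show Finset.Icc (-1:ℤ) 0 = insert (-1) {0} from by ext i; simp; omega,
        Finset.sum_insert (by decide), Finset.sum_singleton,
        show (-1:ℤ) - (-1) = 0 by ring, show (-1:ℤ) - 0 = -1 by ring, h0]
      norm_num
    · rw [MR_coeff v hlow 1, show (1:ℤ)+1 = 2 by ring,
        show Finset.Icc (-1:ℤ) 2 = insert (-1) (insert 0 (insert 1 {2})) from by
          ext i; simp; omega,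
        Finset.sum_insert (by decide), Finset.sum_insert (by decide),
        Finset.sum_insert (by decide), Finset.sum_singleton,
        show (1:ℤ) - (-1) = 2 by ring, show (1:ℤ) - 0 = 1 by ring,
        show (1:ℤ) - 1 = 0 by ring, show (1:ℤ) - 2 = -1 by ring, h0, h2]
      norm_num
    · intro k hk
      rw [MR_coeff v hlow k, Finset.Icc_eq_empty (by omega), Finset.sum_empty,
        hlow (k+1) (by omega)]
      ring
  · intro u hu
    exact ⟨vOf u, ⟨memV_vOf u, MR_vOf u hu⟩, fun v hv => eq_vOf u v hv.1 hv.2⟩
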